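/- Stationarity of the binomial distribution for the Ehrenfest process (Theorem 3.3(c)): for every j ∈ {0,1,…,N} and every t ≥ 0, Σ_{i=0}^{N} ω(i) · p_{ij}(t) = ω(j), where ω(x) := C(N,x) p^x q^{N−x}. -/

import Mathlib

open Finset

/-- The Krawtchouk polynomial `K_l(x; N; p)`, defined via the hypergeometric sum. -/
noncomputable def krawtchouk (N : ℕ) (p : ℝ) (l x : ℕ) : ℝ :=
  ∑ k ∈ Finset.range (N + 1),
    ((ascPochhammer ℝ k).eval (-(l : ℝ)) * (ascPochhammer ℝ k).eval (-(x : ℝ))) /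
      ((ascPochhammer ℝ k).eval (-(N : ℝ)) * (Nat.factorial k : ℝ)) * (1 / p) ^ k

/-- Transition probabilities `p_{ij}(t)` of the continuous-time Ehrenfest process,
where `p = α/(α+β)` and `q = 1 - p`. -/
noncomputable def ehrenfestP (N : ℕ) (p q lam α β : ℝ) (i j : ℕ) (t : ℝ) : ℝ :=
  (N.choose j : ℝ) * (p / q) ^ j *
    ∑ x ∈ Finset.range (N + 1),
      (N.choose x : ℝ) * p ^ x * q ^ (N - x) * krawtchouk N p i x * krawtchouk N p j x *
        Real.exp (-(lam * (α + β) * (x : ℝ) * t))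

/-- The binomial weight `ω(x) = C(N,x) p^x q^{N-x}`. -/
noncomputable def binomWeight (N : ℕ) (p q : ℝ) (x : ℕ) : ℝ :=
  (N.choose x : ℝ) * p ^ x * q ^ (N - x)

lemma asc_neg (k n : ℕ) : (ascPochhammer ℝ k).eval (-(n:ℝ)) =
    (-1)^k * ((Nat.factorial k : ℝ) * (n.choose k : ℝ)) := by
  rw [ascPochhammer_eval_neg_eq_descPochhammer, descPochhammer_eval_eq_descFactorial,
    Nat.descFactorial_eq_factorial_mul_choose]
  push_cast
  ring

lemma kraw_eq (N : ℕ) {p : ℝ} (hp : p ≠ 0) (l x : ℕ) :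
    krawtchouk N p l x = ∑ k ∈ Finset.range (N+1),
      (-1:ℝ)^k * (l.choose k) * (x.choose k) / ((N.choose k) * p^k) := by
  unfold krawtchouk
  refine Finset.sum_congr rfl fun k hk => ?_
  have hkN : k ≤ N := by simpa [Nat.lt_succ_iff] using hk
  rw [asc_neg, asc_neg, asc_neg]
  have hc : (N.choose k : ℝ) ≠ 0 := by
    exact_mod_cast (Nat.choose_pos hkN).ne'
  have hf : (Nat.factorial k : ℝ) ≠ 0 := by exact_mod_cast (Nat.factorial_pos k).ne'
  have hs : ((-1:ℝ))^k ≠ 0 := by positivity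
  field_simp
  rw [mul_assoc, ← mul_pow, one_div_mul_cancel hp, one_pow, mul_one]

lemma kraw_symm (N : ℕ) (p : ℝ) (l x : ℕ) : krawtchouk N p l x = krawtchouk N p x l := by
  unfold krawtchouk
  exact Finset.sum_congr rfl fun k _ => by ring

lemma ehren_inner_sum (N k : ℕ) (hk : k ≤ N) (p q : ℝ) (hpq : p + q = 1) :
    ∑ i ∈ Finset.range (N+1), (N.choose i : ℝ) * (i.choose k) * p^i * q^(N-i)
      = (N.choose k) * p^k := by
  have h1 : ∑ i ∈ Finset.range (N+1), (N.choose i : ℝ) * (i.choose k) * p^i * q^(N-i)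
      = ∑ i ∈ Finset.Ico k (N+1), (N.choose i : ℝ) * (i.choose k) * p^i * q^(N-i) := by
    refine (Finset.sum_subset ?_ ?_).symm
    · intro i hi
      simp only [Finset.mem_Ico, Finset.mem_range] at *
      omega
    · intro i hi hni
      simp only [Finset.mem_Ico, Finset.mem_range] at *
      have : i < k := by omega
      rw [Nat.choose_eq_zero_of_lt this]
      simp
  rw [h1, Finset.sum_Ico_eq_sum_range]
  have h2 : N + 1 - k = (N - k) + 1 := by omega
  rw [h2]
  have key : ∀ m ∈ Finset.range (N - k + 1),
      (N.choose (k+m) : ℝ) * ((k+m).choose k) * p^(k+m) * q^(N-(k+m))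
        = (N.choose k : ℝ) * p ^ k * ((N-k).choose m * p^m * q^(N-k-m)) := by
    intro m hm
    have hm' : m ≤ N - k := by simpa [Nat.lt_succ_iff] using hm
    have hchoose : N.choose (k+m) * (k+m).choose k = N.choose k * (N-k).choose m := by
      have := Nat.choose_mul (n := N) (k := k + m) (s := k) (by omega)
      simpa using this
    have hcast : (N.choose (k+m) : ℝ) * ((k+m).choose k) = (N.choose k : ℝ) * ((N-k).choose m) := by
      exact_mod_cast congrArg (Nat.cast : ℕ → ℝ) hchoose
    have hq : N - (k + m) = N - k - m := by omega
    rw [hq, pow_add]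
    calc (N.choose (k+m) : ℝ) * ((k+m).choose k) * (p^k * p^m) * q^(N-k-m)
        = ((N.choose (k+m) : ℝ) * ((k+m).choose k)) * (p^k * p^m) * q^(N-k-m) := by ring
      _ = ((N.choose k : ℝ) * ((N-k).choose m)) * (p^k * p^m) * q^(N-k-m) := by rw [hcast]
      _ = (N.choose k : ℝ) * p ^ k * ((N-k).choose m * p^m * q^(N-k-m)) := by ring
  rw [Finset.sum_congr rfl key, ← Finset.mul_sum]
  have hbin : ∑ m ∈ Finset.range (N - k + 1), ((N-k).choose m : ℝ) * p^m * q^(N-k-m) = 1 := by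
    have := add_pow p q (N - k)
    rw [hpq, one_pow] at this
    conv_rhs => rw [this]
    exact Finset.sum_congr rfl fun m hm => by ring
  rw [hbin, mul_one]

lemma ehren_alt_sum (N x : ℕ) (hx : x ≤ N) :
    ∑ k ∈ Finset.range (N+1), (-1:ℝ)^k * (x.choose k) = if x = 0 then 1 else 0 := by
  have h1 : ∑ k ∈ Finset.range (N+1), (-1:ℝ)^k * (x.choose k)
      = ∑ k ∈ Finset.range (x+1), (-1:ℝ)^k * (x.choose k) := by
    refine (Finset.sum_subset ?_ ?_).symm
    · intro k hk; simp only [Finset.mem_range] at *; omega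
    · intro k hk hnk
      simp only [Finset.mem_range] at *
      rw [Nat.choose_eq_zero_of_lt (by omega)]
      simp
  rw [h1]
  have h2 := congrArg (fun z : ℤ => (z : ℝ)) (Int.alternating_sum_range_choose (n := x))
  push_cast at h2
  convert h2 using 2

lemma ehren_delta (N x : ℕ) (hx : x ≤ N) {p q : ℝ} (hp : p ≠ 0) (hpq : p + q = 1) :
    ∑ i ∈ Finset.range (N+1), (N.choose i : ℝ) * p^i * q^(N-i) * krawtchouk N p x i
      = if x = 0 then 1 else 0 := by
  calc ∑ i ∈ Finset.range (N+1), (N.choose i : ℝ) * p^i * q^(N-i) * krawtchouk N p x i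
      = ∑ i ∈ Finset.range (N+1), ∑ k ∈ Finset.range (N+1),
          (N.choose i : ℝ) * p^i * q^(N-i) *
            ((-1:ℝ)^k * (x.choose k) * (i.choose k) / ((N.choose k) * p^k)) := by
        refine Finset.sum_congr rfl fun i _ => ?_
        rw [kraw_eq N hp x i, Finset.mul_sum]
    _ = ∑ k ∈ Finset.range (N+1), ∑ i ∈ Finset.range (N+1),
          (N.choose i : ℝ) * p^i * q^(N-i) *
            ((-1:ℝ)^k * (x.choose k) * (i.choose k) / ((N.choose k) * p^k)) :=
        Finset.sum_comm
    _ = ∑ k ∈ Finset.range (N+1), (-1:ℝ)^k * (x.choose k) := by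
        refine Finset.sum_congr rfl fun k hk => ?_
        have hkN : k ≤ N := by simpa [Nat.lt_succ_iff] using hk
        have hc : (N.choose k : ℝ) ≠ 0 := by exact_mod_cast (Nat.choose_pos hkN).ne'
        have hpk : p^k ≠ 0 := pow_ne_zero _ hp
        have hstep : ∑ i ∈ Finset.range (N+1),
            (N.choose i : ℝ) * p^i * q^(N-i) *
              ((-1:ℝ)^k * (x.choose k) * (i.choose k) / ((N.choose k) * p^k))
            = ((-1:ℝ)^k * (x.choose k) / ((N.choose k) * p^k)) *
              ∑ i ∈ Finset.range (N+1), (N.choose i : ℝ) * (i.choose k) * p^i * q^(N-i) := by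
          rw [Finset.mul_sum]
          exact Finset.sum_congr rfl fun i _ => by ring
        rw [hstep, ehren_inner_sum N k hkN p q hpq]
        field_simp
    _ = if x = 0 then 1 else 0 := ehren_alt_sum N x hx

lemma kraw_zero (N : ℕ) {p : ℝ} (hp : p ≠ 0) (j : ℕ) : krawtchouk N p j 0 = 1 := by
  rw [kraw_eq N hp j 0]
  rw [Finset.sum_eq_single 0]
  · simp
  · intro k _ hk0
    rw [Nat.choose_eq_zero_of_lt (Nat.pos_of_ne_zero hk0)]
    simp
  · intro h
    simp at h


/-- The binomial distribution is stationary for the Ehrenfest process. -/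
theorem ehrenfest_binomial_stationary (N : ℕ) (lam α β : ℝ) (hlam : 0 < lam)
    (hα : α ∈ Set.Ioc (0 : ℝ) 1) (hβ : β ∈ Set.Ioc (0 : ℝ) 1)
    (p q : ℝ) (hp : p = α / (α + β)) (hq : q = 1 - p)
    (j : ℕ) (hj : j ≤ N) (t : ℝ) (ht : 0 ≤ t) :
    ∑ i ∈ Finset.range (N + 1), binomWeight N p q i * ehrenfestP N p q lam α β i j t =
      binomWeight N p q j := by
  have hα0 : 0 < α := hα.1
  have hβ0 : 0 < β := hβ.1
  have hab : 0 < α + β := by linarith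
  have hp0 : 0 < p := by rw [hp]; positivity
  have hp1 : p < 1 := by rw [hp]; rw [div_lt_one hab]; linarith
  have hq0 : 0 < q := by rw [hq]; linarith
  have hpq : p + q = 1 := by rw [hq]; ring
  have pne : p ≠ 0 := hp0.ne'
  have qne : q ≠ 0 := hq0.ne'
  simp only [ehrenfestP, binomWeight]
  calc ∑ i ∈ Finset.range (N + 1), (N.choose i : ℝ) * p ^ i * q ^ (N - i) *
        ((N.choose j : ℝ) * (p / q) ^ j *
          ∑ x ∈ Finset.range (N + 1),
            (N.choose x : ℝ) * p ^ x * q ^ (N - x) * krawtchouk N p i x * krawtchouk N p j x *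
              Real.exp (-(lam * (α + β) * (x : ℝ) * t)))
      = ∑ i ∈ Finset.range (N + 1), ∑ x ∈ Finset.range (N + 1),
          ((N.choose j : ℝ) * (p / q) ^ j *
            ((N.choose x : ℝ) * p ^ x * q ^ (N - x) * krawtchouk N p j x *
              Real.exp (-(lam * (α + β) * (x : ℝ) * t)))) *
            ((N.choose i : ℝ) * p ^ i * q ^ (N - i) * krawtchouk N p x i) := by
        refine Finset.sum_congr rfl fun i _ => ?_
        rw [Finset.mul_sum, Finset.mul_sum]
        refine Finset.sum_congr rfl fun x _ => ?_
        rw [kraw_symm N p i x]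
        ring
    _ = ∑ x ∈ Finset.range (N + 1), ∑ i ∈ Finset.range (N + 1),
          ((N.choose j : ℝ) * (p / q) ^ j *
            ((N.choose x : ℝ) * p ^ x * q ^ (N - x) * krawtchouk N p j x *
              Real.exp (-(lam * (α + β) * (x : ℝ) * t)))) *
            ((N.choose i : ℝ) * p ^ i * q ^ (N - i) * krawtchouk N p x i) :=
        Finset.sum_comm
    _ = ∑ x ∈ Finset.range (N + 1),
          ((N.choose j : ℝ) * (p / q) ^ j *
            ((N.choose x : ℝ) * p ^ x * q ^ (N - x) * krawtchouk N p j x *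
              Real.exp (-(lam * (α + β) * (x : ℝ) * t)))) *
            (if x = 0 then (1:ℝ) else 0) := by
        refine Finset.sum_congr rfl fun x hx => ?_
        have hxN : x ≤ N := by simpa [Nat.lt_succ_iff] using hx
        rw [← Finset.mul_sum, ehren_delta N x hxN pne hpq]
    _ = (N.choose j : ℝ) * (p / q) ^ j * q ^ N := by
        rw [Finset.sum_eq_single 0]
        · rw [kraw_zero N pne j]
          simp
        · intro x _ hx0
          rw [if_neg hx0, mul_zero]
        · intro h
          simp at h
    _ = (N.choose j : ℝ) * p ^ j * q ^ (N - j) := by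
        have hqN : q ^ N = q ^ j * q ^ (N - j) := by
          rw [← pow_add]
          congr 1
          omega
        rw [div_pow, hqN]
        field_simp
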